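/- arXiv:0802.1456 — 2 statements merged into one kernel-verified Lean document; each statement's English description precedes it below -/
import Mathlib

section
/- For any positive definite symmetric m×m real matrix A with A ≥ γI for some γ > 0, one has log det(A) = min { m·log a − m + tr(A·M) : a > 0, M symmetric, 0 ≤ M ≤ (1/γ)I, det M = a^{−m} }, where the minimum is attained. -/
open Matrix Real
open scoped MatrixOrder

private lemma psd_smul' {n : ℕ} {M : Matrix (Fin n) (Fin n) ℝ} (hM : M.PosSemidef) {c : ℝ}
    (hc : 0 ≤ c) : (c • M).PosSemidef := by
  refine ⟨?_, fun x => ?_⟩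
  · unfold Matrix.IsHermitian
    rw [conjTranspose_smul, hM.1]; simp
  · have h := mul_nonneg hc (hM.2 x)
    simp_rw [Finsupp.mul_sum] at h
    simpa [Matrix.smul_apply, smul_eq_mul, mul_assoc, mul_left_comm] using h

private lemma trace_eq_sum_eig {n : ℕ} {C : Matrix (Fin n) (Fin n) ℝ} (hC : C.IsHermitian) :
    C.trace = ∑ i, hC.eigenvalues i := by
  nth_rewrite 1 [hC.spectral_theorem]
  rw [Unitary.conjStarAlgAut_apply]
  rw [trace_mul_comm, ← mul_assoc, Unitary.coe_star_mul_self, one_mul, trace_diagonal]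
  simp

private lemma key_ineq {n : ℕ} {C : Matrix (Fin n) (Fin n) ℝ} (hC : C.PosSemidef)
    (hdet : 0 < C.det) : (n : ℝ) + Real.log C.det ≤ C.trace := by
  have hH := hC.isHermitian
  have hnn : ∀ i, 0 ≤ hH.eigenvalues i := hC.eigenvalues_nonneg
  have hprod : C.det = ∏ i, hH.eigenvalues i := by
    rw [hH.det_eq_prod_eigenvalues]; simp
  have hpos : ∀ i, 0 < hH.eigenvalues i := by
    intro i
    rcases (hnn i).lt_or_eq with h | h
    · exact h
    · exfalso
      rw [hprod] at hdet
      exact absurd (Finset.prod_eq_zero (Finset.mem_univ i) h.symm) (by positivity)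
  have hlog : Real.log C.det = ∑ i, Real.log (hH.eigenvalues i) := by
    rw [hprod, Real.log_prod fun i _ => (hpos i).ne']
  rw [hlog, trace_eq_sum_eig hH]
  have h1 : ∀ i ∈ Finset.univ, 1 + Real.log (hH.eigenvalues i) ≤ hH.eigenvalues i := by
    intro i _
    have := Real.log_le_sub_one_of_pos (hpos i)
    linarith
  calc (n : ℝ) + ∑ i, Real.log (hH.eigenvalues i)
      = ∑ i : Fin n, (1 + Real.log (hH.eigenvalues i)) := by
        rw [Finset.sum_add_distrib]; simp
    _ ≤ ∑ i, hH.eigenvalues i := Finset.sum_le_sum h1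

private lemma inv_le_gamma_inv (m : ℕ) (γ : ℝ) (hγ : 0 < γ)
    (A : Matrix (Fin m) (Fin m) ℝ) (hA : A.PosDef)
    (hAγ : (A - γ • (1 : Matrix (Fin m) (Fin m) ℝ)).PosSemidef) :
    ((γ⁻¹ • (1 : Matrix (Fin m) (Fin m) ℝ)) - A⁻¹).PosSemidef := by
  have hU : IsUnit A.det := hA.det_pos.ne'.isUnit
  have hinv : A * A⁻¹ = 1 := mul_nonsing_inv A hU
  have hinv' : A⁻¹ * A = 1 := nonsing_inv_mul A hU
  set B := A - γ • (1 : Matrix (Fin m) (Fin m) ℝ) with hB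
  have hX : (B * B + γ • B).PosSemidef := by
    have h1 : (B * B).PosSemidef := by
      have := posSemidef_conjTranspose_mul_self B
      rwa [hAγ.1] at this
    exact h1.add (psd_smul' hAγ hγ.le)
  have hAinvH : (A⁻¹)ᴴ = A⁻¹ := hA.inv.isHermitian
  have hconj : ((Real.sqrt γ⁻¹ • A⁻¹)ᴴ * (B * B + γ • B) * (Real.sqrt γ⁻¹ • A⁻¹)).PosSemidef :=
    hX.conjTranspose_mul_mul_same _
  have heq : ((Real.sqrt γ⁻¹ • A⁻¹)ᴴ * (B * B + γ • B) * (Real.sqrt γ⁻¹ • A⁻¹))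
      = (γ⁻¹ • (1 : Matrix (Fin m) (Fin m) ℝ)) - A⁻¹ := by
    have hs : Real.sqrt γ⁻¹ * Real.sqrt γ⁻¹ = γ⁻¹ :=
      Real.mul_self_sqrt (by positivity)
    rw [conjTranspose_smul, hAinvH]
    rw [hB]
    simp only [Matrix.sub_mul, Matrix.mul_sub, Matrix.smul_mul, Matrix.mul_smul, Matrix.one_mul,
      Matrix.mul_one, Matrix.add_mul, Matrix.mul_add, smul_sub, smul_add, star_trivial, hs,
      Matrix.mul_assoc, hinv, hinv', mul_inv_cancel₀ hγ.ne']
    match_scalars <;> field_simp <;> rw [Real.sq_sqrt (by positivity)] <;> field_simp <;> ring_nf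
  rwa [heq] at hconj

/-- Variational formula for `log det`: for a symmetric positive definite matrix `A ≥ γ I`,
`log det A` is the minimum (attained) of `m log a - m + tr (A M)` over `a > 0` and
symmetric `M` with `0 ≤ M ≤ (1/γ) I` and `det M = a⁻ᵐ`. -/
theorem logdet_variational_formula (m : ℕ) (hm : 0 < m) (γ : ℝ) (hγ : 0 < γ)
    (A : Matrix (Fin m) (Fin m) ℝ) (hA : A.PosDef)
    (hAγ : (A - γ • (1 : Matrix (Fin m) (Fin m) ℝ)).PosSemidef) :
    IsLeast {v : ℝ | ∃ (a : ℝ) (M : Matrix (Fin m) (Fin m) ℝ), 0 < a ∧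
        M.PosSemidef ∧ ((γ⁻¹ • (1 : Matrix (Fin m) (Fin m) ℝ)) - M).PosSemidef ∧
        M.det = a ^ (-(m : ℤ)) ∧
        v = m * Real.log a - m + (A * M).trace}
      (Real.log A.det) := by
  have hU : IsUnit A.det := hA.det_pos.ne'.isUnit
  have hinv : A * A⁻¹ = 1 := mul_nonsing_inv A hU
  constructor
  · -- membership: a = det(A)^(1/m), M = A⁻¹
    set a : ℝ := A.det ^ ((m : ℝ)⁻¹) with ha_def
    have ha : 0 < a := Real.rpow_pos_of_pos hA.det_pos _
    have ham : a ^ (m : ℕ) = A.det := by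
      rw [ha_def, ← Real.rpow_natCast (A.det ^ ((m : ℝ)⁻¹)) m, ← Real.rpow_mul hA.det_pos.le,
        inv_mul_cancel₀ (Nat.cast_ne_zero.mpr hm.ne'), Real.rpow_one]
    refine ⟨a, A⁻¹, ha, hA.inv.posSemidef, inv_le_gamma_inv m γ hγ A hA hAγ, ?_, ?_⟩
    · rw [det_nonsing_inv, Ring.inverse_eq_inv', _root_.zpow_neg, zpow_natCast, ham]
    · rw [hinv, trace_one]
      have hlog : (m : ℝ) * Real.log a = Real.log A.det := by
        rw [← Real.log_pow, ham]
      simp only [Fintype.card_fin]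
      linarith
  · -- lower bound
    rintro v ⟨a, M, ha, hM, hγM, hdetM, hv⟩
    set S := CFC.sqrt A with hS_def
    have hSps : S.PosSemidef := (CFC.sqrt_nonneg A).posSemidef
    have hSH : Sᴴ = S := hSps.isHermitian
    have hSS : S * S = A := CFC.sqrt_mul_sqrt_self A hA.posSemidef.nonneg
    have hC : (S * M * S).PosSemidef := by
      have := hM.mul_mul_conjTranspose_same S
      rwa [hSH] at this
    have hMdet : 0 < M.det := by
      rw [hdetM]; exact zpow_pos ha _
    have hdetC : (S * M * S).det = A.det * M.det := by
      rw [det_mul, det_mul, ← hSS, det_mul]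
      ring
    have hdetCpos : 0 < (S * M * S).det := by
      rw [hdetC]; exact mul_pos hA.det_pos hMdet
    have htr : (S * M * S).trace = (A * M).trace := by
      rw [Matrix.trace_mul_comm, ← Matrix.mul_assoc, hSS]
    have hkey := key_ineq hC hdetCpos
    rw [htr, hdetC, Real.log_mul hA.det_pos.ne' hMdet.ne', hdetM, Real.log_zpow] at hkey
    rw [hv]
    push_cast at hkey ⊢
    linarith
end

section
/- If A is a positive definite symmetric m×m real matrix with A ≥ γI, and M is symmetric with 0 ≤ M ≤ (1/γ)I and det M = a^{−m} for some a > 0, then m·log a − m + tr(A·M) ≥ log det A. -/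
open Matrix Real

/-- The inequality direction of the variational formula for `log det`:
if `A ≥ γ I > 0`, `0 ≤ M ≤ (1/γ) I` and `det M = a⁻ᵐ` with `a > 0`, then
`m log a - m + tr (A M) ≥ log det A`. -/
theorem logdet_variational_ineq (m : ℕ) (γ : ℝ) (hγ : 0 < γ)
    (A M : Matrix (Fin m) (Fin m) ℝ) (hA : A.PosDef)
    (hAγ : (A - γ • (1 : Matrix (Fin m) (Fin m) ℝ)).PosSemidef)
    (hM : M.PosSemidef)
    (hMγ : ((γ⁻¹ • (1 : Matrix (Fin m) (Fin m) ℝ)) - M).PosSemidef)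
    (a : ℝ) (ha : 0 < a) (hdet : M.det = a ^ (-(m : ℤ))) :
    Real.log A.det ≤ m * Real.log a - m + (A * M).trace := by
  classical
  open scoped MatrixOrder in
  obtain ⟨s, hs, hsH⟩ : ∃ s : Matrix (Fin m) (Fin m) ℝ, s * s = A ∧ s.IsHermitian :=
    ⟨CFC.sqrt A, CFC.sqrt_mul_sqrt_self A hA.posSemidef.nonneg,
      (CFC.sqrt_nonneg A).posSemidef.isHermitian⟩
  set B := s * M * s with hB_def
  have hB : B.PosSemidef := by
    have := hM.mul_mul_conjTranspose_same s
    rwa [hsH.eq] at this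
  have hH : B.IsHermitian := hB.isHermitian
  -- trace of B
  have htrB : B.trace = (A * M).trace := by
    rw [hB_def, Matrix.trace_mul_cycle, hs]
  -- det of B
  have hdetB : B.det = A.det * M.det := by
    rw [hB_def, Matrix.det_mul, Matrix.det_mul, ← hs, Matrix.det_mul]; ring
  have hdetA : 0 < A.det := hA.det_pos
  have hdetM : 0 < M.det := by rw [hdet]; positivity
  have hdetBpos : 0 < B.det := by rw [hdetB]; positivity
  -- eigenvalues of B
  have hegnn : ∀ i, 0 ≤ hH.eigenvalues i := hB.eigenvalues_nonneg
  have hprod : B.det = ∏ i, hH.eigenvalues i := by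
    have := hH.det_eq_prod_eigenvalues
    simpa using this
  have hegpos : ∀ i, 0 < hH.eigenvalues i := by
    intro i
    rcases (hegnn i).lt_or_eq with h | h
    · exact h
    · exfalso
      have : B.det = 0 := by
        rw [hprod]
        exact Finset.prod_eq_zero (Finset.mem_univ i) h.symm
      linarith
  -- trace = sum of eigenvalues
  have htr : B.trace = ∑ i, hH.eigenvalues i := by
    nth_rewrite 1 [hH.spectral_theorem]
    rw [Unitary.conjStarAlgAut_apply, Matrix.trace_mul_cycle]
    simp [Matrix.trace_diagonal, Function.comp]
  -- key: log det B ≤ trace B - m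
  have hlogprod : Real.log B.det = ∑ i, Real.log (hH.eigenvalues i) := by
    rw [hprod]
    exact Real.log_prod fun i _ => (hegpos i).ne'
  have hkey : Real.log B.det ≤ B.trace - m := by
    rw [hlogprod, htr]
    have : ∑ i, Real.log (hH.eigenvalues i) ≤ ∑ i, (hH.eigenvalues i - 1) :=
      Finset.sum_le_sum fun i _ => Real.log_le_sub_one_of_pos (hegpos i)
    rw [Finset.sum_sub_distrib] at this
    simpa using this
  -- assemble
  have hlogB : Real.log B.det = Real.log A.det + Real.log M.det := by
    rw [hdetB, Real.log_mul hdetA.ne' hdetM.ne']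
  have hlogM : Real.log M.det = -(m * Real.log a) := by
    rw [hdet, Real.log_zpow]
    push_cast
    ring
  rw [hlogB, hlogM, htrB] at hkey
  linarith
end
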